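/- For all positive integers k and t, M_2(k+t, k) ≤ Σ_{i=1}^{t+1} C(k+t, i), where C(·,·) denotes the binomial coefficient. -/

import Mathlib

open Finset

/-- The support of a vector `x ∈ F_2^n`: the set of nonzero coordinates. -/
def supp {n : ℕ} (x : Fin n → ZMod 2) : Set (Fin n) := {i | x i ≠ 0}

/-- `c` is a minimal codeword of the linear code (subspace) `C ≤ F_2^n`:
it is a nonzero codeword and no nonzero codeword has support properly contained in `supp c`. -/
def IsMinimal {n : ℕ} (C : Submodule (ZMod 2) (Fin n → ZMod 2)) (c : Fin n → ZMod 2) : Prop :=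
  c ∈ C ∧ c ≠ 0 ∧ ∀ c' ∈ C, c' ≠ 0 → ¬ supp c' ⊂ supp c

/-- `M(C)`: the number of minimal codewords of `C`. -/
noncomputable def Mcode {n : ℕ} (C : Submodule (ZMod 2) (Fin n → ZMod 2)) : ℕ :=
  Set.ncard {c | IsMinimal C c}

/-- The `i`-th row `g^i` of the systematic generator matrix `G = [I_k | A]`. -/
def row {k t : ℕ} (A : Fin k → Fin t → ZMod 2) (i : Fin k) : Fin (k + t) → ZMod 2 :=
  Fin.append (Pi.single i 1) (A i)

/-- The binary linear `[k+t, k]` code with systematic generator matrix `G = [I_k | A]`. -/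
def genCode {k t : ℕ} (A : Fin k → Fin t → ZMod 2) :
    Submodule (ZMod 2) (Fin (k + t) → ZMod 2) :=
  Submodule.span (ZMod 2) (Set.range (row A))

/-- `c^S = ∑_{i ∈ S} g^i`. -/
def cS {k t : ℕ} (A : Fin k → Fin t → ZMod 2) (S : Finset (Fin k)) : Fin (k + t) → ZMod 2 :=
  ∑ i ∈ S, row A i

/-- `c_I`: the restriction of a codeword to its last `t` coordinates (the information bits). -/
def infoBits {k t : ℕ} (c : Fin (k + t) → ZMod 2) : Fin t → ZMod 2 :=
  fun j => c (Fin.natAdd k j)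

/-- `a_τ(A)` : the number of indices `i` with `g^i_I = A i = τ`. -/
def aCount {k t : ℕ} (A : Fin k → Fin t → ZMod 2) (τ : Fin t → ZMod 2) : ℕ :=
  (Finset.univ.filter fun i => A i = τ).card

/-- `M_2(n, k)`: the maximum of `M(C)` over all binary linear `[n, k]` codes `C`. -/
noncomputable def M2 (n k : ℕ) : ℕ :=
  sSup {m | ∃ C : Submodule (ZMod 2) (Fin n → ZMod 2),
    Module.finrank (ZMod 2) C = k ∧ Mcode C = m}


lemma zmod2_eq_of_supp {n : ℕ} {x y : Fin n → ZMod 2}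
    (h : ∀ i, x i ≠ 0 ↔ y i ≠ 0) : x = y := by
  have key : ∀ a b : ZMod 2, (a ≠ 0 ↔ b ≠ 0) → a = b := by decide
  funext i; exact key _ _ (h i)

lemma weight_bound {n k : ℕ} (C : Submodule (ZMod 2) (Fin n → ZMod 2))
    (hC : Module.finrank (ZMod 2) C = k) {c : Fin n → ZMod 2}
    (hc : IsMinimal C c) :
    (Finset.univ.filter fun i => c i ≠ 0).card + k ≤ n + 1 := by
  classical
  obtain ⟨hcC, hc0, hmin⟩ := hc
  set f : C →ₗ[ZMod 2] ({i : Fin n // c i = 0} → ZMod 2) :=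
    (LinearMap.funLeft (ZMod 2) (ZMod 2) Subtype.val).comp C.subtype with hf
  have hker : LinearMap.ker f ≤ Submodule.span (ZMod 2) {(⟨c, hcC⟩ : C)} := by
    intro x hx
    have hx' : ∀ i : Fin n, c i = 0 → (x : Fin n → ZMod 2) i = 0 := by
      intro i hi
      exact congrFun (LinearMap.mem_ker.mp hx) ⟨i, hi⟩
    by_cases hx0 : (x : Fin n → ZMod 2) = 0
    · have : x = 0 := Subtype.ext hx0
      simp [this]
    · have hsub : supp (x : Fin n → ZMod 2) ⊆ supp c := by
        intro i hi hci
        exact hi (hx' i hci)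
      have heq : supp (x : Fin n → ZMod 2) = supp c := by
        by_contra hne
        exact hmin x x.2 hx0 (HasSubset.Subset.ssubset_of_ne hsub hne)
      have hxc : (x : Fin n → ZMod 2) = c := by
        apply zmod2_eq_of_supp
        intro i
        exact Set.ext_iff.mp heq i
      have : x = (⟨c, hcC⟩ : C) := Subtype.ext hxc
      rw [this]
      exact Submodule.mem_span_singleton_self _
  have hcne : (⟨c, hcC⟩ : C) ≠ 0 := by
    intro h
    exact hc0 (congrArg Subtype.val h)
  have h1 : Module.finrank (ZMod 2) (LinearMap.ker f) ≤ 1 := by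
    calc Module.finrank (ZMod 2) (LinearMap.ker f)
        ≤ Module.finrank (ZMod 2) (Submodule.span (ZMod 2) {(⟨c, hcC⟩ : C)}) :=
          Submodule.finrank_mono hker
      _ = 1 := finrank_span_singleton hcne
  have h2 : Module.finrank (ZMod 2) (LinearMap.range f)
      ≤ (Finset.univ.filter fun i => c i = 0).card := by
    calc Module.finrank (ZMod 2) (LinearMap.range f)
        ≤ Module.finrank (ZMod 2) ({i : Fin n // c i = 0} → ZMod 2) :=
          Submodule.finrank_le _
      _ = Fintype.card {i : Fin n // c i = 0} := Module.finrank_pi _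
      _ = (Finset.univ.filter fun i => c i = 0).card := Fintype.card_subtype _
  have hrn := LinearMap.finrank_range_add_finrank_ker f
  rw [hC] at hrn
  have hcount : ((Finset.univ.filter fun i => c i = 0).card
      + (Finset.univ.filter fun i => ¬ c i = 0).card) = n := by
    rw [Finset.card_filter_add_card_filter_not, Finset.card_univ, Fintype.card_fin]
  simp only [ne_eq]
  omega

theorem stmt3 (k t : ℕ) (hk : 0 < k) (ht : 0 < t) :
    M2 (k + t) k ≤ ∑ i ∈ Finset.Icc 1 (t + 1), (k + t).choose i := by
  classical
  apply csSup_le'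
  rintro m ⟨C, hC, rfl⟩
  have hfin : {c | IsMinimal C c}.Finite := Set.toFinite _
  rw [Mcode, Set.ncard_eq_toFinset_card _ hfin]
  set B := (Finset.Icc 1 (t + 1)).biUnion
    (fun i => Finset.powersetCard i (Finset.univ : Finset (Fin (k + t)))) with hB
  have hcard : B.card = ∑ i ∈ Finset.Icc 1 (t + 1), (k + t).choose i := by
    rw [hB, Finset.card_biUnion]
    · exact Finset.sum_congr rfl fun i _ => by
        rw [Finset.card_powersetCard, Finset.card_univ, Fintype.card_fin]
    · intro x _ y _ hxy
      refine Finset.disjoint_left.mpr fun s hs hs' => hxy ?_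
      rw [← (Finset.mem_powersetCard.mp hs).2, (Finset.mem_powersetCard.mp hs').2]
  rw [← hcard]
  apply Finset.card_le_card_of_injOn (fun c => Finset.univ.filter fun i => c i ≠ 0)
  · intro c hcmem
    rw [Finset.mem_coe, Set.Finite.mem_toFinset] at hcmem
    have h1 : 1 ≤ (Finset.univ.filter fun i => c i ≠ 0).card := by
      obtain ⟨i, hi⟩ := Function.ne_iff.mp hcmem.2.1
      refine Finset.card_pos.mpr ⟨i, ?_⟩
      simp only [Finset.mem_filter, Finset.mem_univ, true_and]
      simpa using hi
    have h2 := weight_bound C hC hcmem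
    refine Finset.mem_biUnion.mpr ⟨(Finset.univ.filter fun i => c i ≠ 0).card, ?_, ?_⟩
    · rw [Finset.mem_Icc]; omega
    · exact Finset.mem_powersetCard.mpr ⟨Finset.subset_univ _, rfl⟩
  · intro c _ c' _ h
    apply zmod2_eq_of_supp
    intro i
    have := Finset.ext_iff.mp h i
    simpa using this
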